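/- Let Ŝ = {(f_{ij}) ∈ M_m(K[[t₁,…,t_m]]) : ∑_{i=1}^m t_i f_{ij} = 0 for all j, and each f_{ij} has zero constant term}. Then every element of I_m + Ŝ is invertible in M_m(K[[t₁,…,t_m]]) and its inverse again lies in I_m + Ŝ; hence I_m + Ŝ is a group under multiplication. -/

import Mathlib

open MvPowerSeries Matrix

/-- Let `Ŝ` be the set of matrices over `K[[t₁,…,t_m]]` whose entries have zero
constant term and whose columns are orthogonal to `(t₁,…,t_m)`. Every element of
`I_m + Ŝ` is invertible in `M_m(K[[t₁,…,t_m]])` with inverse again in `I_m + Ŝ`;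
hence `I_m + Ŝ` is a group under multiplication. -/
theorem one_add_S_hat_is_group
    (K : Type*) [Field K] [CharZero K] (m : ℕ)
    (A : Matrix (Fin m) (Fin m) (MvPowerSeries (Fin m) K))
    (hA : ∀ j, ∑ i : Fin m, (MvPowerSeries.X i : MvPowerSeries (Fin m) K) * A i j = 0)
    (hA0 : ∀ i j, MvPowerSeries.constantCoeff (A i j) = 0) :
    IsUnit (1 + A) ∧
      ∃ B : Matrix (Fin m) (Fin m) (MvPowerSeries (Fin m) K),
        (∀ j, ∑ i : Fin m, (MvPowerSeries.X i : MvPowerSeries (Fin m) K) * B i j = 0) ∧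
        (∀ i j, MvPowerSeries.constantCoeff (B i j) = 0) ∧
        (1 + A) * (1 + B) = 1 ∧ (1 + B) * (1 + A) = 1 := by
  set φ := (MvPowerSeries.constantCoeff : MvPowerSeries (Fin m) K →+* K) with hφ
  -- entrywise constant coefficient of 1 + A is the identity matrix
  have hmap : (1 + A).map φ = 1 := by
    ext i j
    by_cases h : i = j <;>
      simp [Matrix.map_apply, Matrix.one_apply, h, hA0, map_add]
  -- 1 + A is invertible since its determinant has unit constant coefficient
  have hdet : IsUnit (1 + A).det := by
    rw [MvPowerSeries.isUnit_iff_constantCoeff]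
    have : φ (1 + A).det = ((1 + A).map φ).det := by
      rw [RingHom.map_det, RingHom.mapMatrix_apply]
    rw [this, hmap, Matrix.det_one]
    exact isUnit_one
  have hU : IsUnit (1 + A) := (Matrix.isUnit_iff_isUnit_det _).mpr hdet
  refine ⟨hU, ?_⟩
  obtain ⟨u, hu⟩ := hU
  set B := (↑u⁻¹ : Matrix (Fin m) (Fin m) (MvPowerSeries (Fin m) K)) - 1 with hB
  have hBinv : (1 : Matrix (Fin m) (Fin m) (MvPowerSeries (Fin m) K)) + B = ↑u⁻¹ := by
    rw [hB]; abel
  have h1 : (1 + A) * (1 + B) = 1 := by rw [hBinv, ← hu, Units.mul_inv]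
  have h2 : (1 + B) * (1 + A) = 1 := by rw [hBinv, ← hu, Units.inv_mul]
  -- constant coefficients of B vanish
  have hmapB : (1 + B).map φ = 1 := by
    have := congrArg (Matrix.map · φ) h2
    simp only [Matrix.map_mul, hmap, Matrix.mul_one, Matrix.map_one φ (map_zero φ) (map_one φ)]
      at this
    exact this
  have hB0 : ∀ i j, φ (B i j) = 0 := by
    intro i j
    have h' := congrArg (fun M => M i j) hmapB
    by_cases h : i = j <;>
      simpa [Matrix.map_apply, Matrix.one_apply, h, Matrix.add_apply, map_add] using h'
  refine ⟨B, ?_, hB0, h1, h2⟩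
  -- column relations for B
  intro j
  set v := (fun i => (MvPowerSeries.X i : MvPowerSeries (Fin m) K)) with hv
  have hvA : v ᵥ* (1 + A) = v := by
    funext k
    simp only [Matrix.vecMul, dotProduct, Matrix.add_apply, Matrix.one_apply, mul_add,
      Finset.sum_add_distrib, hA k]
    simp [mul_ite]
    exact hA k
  have hvB : v ᵥ* (1 + B) = v := by
    calc v ᵥ* (1 + B) = (v ᵥ* (1 + A)) ᵥ* (1 + B) := by rw [hvA]
    _ = v ᵥ* ((1 + A) * (1 + B)) := by rw [Matrix.vecMul_vecMul]
    _ = v := by rw [h1, Matrix.vecMul_one]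
  have := congrFun hvB j
  simp only [Matrix.vecMul, dotProduct, Matrix.add_apply, Matrix.one_apply, mul_add,
    Finset.sum_add_distrib, mul_ite, mul_one, mul_zero] at this
  simpa using this
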